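/- Change-of-measure lower bound: for probability measures P_{XY} with marginals P_X, P_Y, an auxiliary distribution Q_Y, α ∈ (0,1), and δ_1 ∈ (0, 1−α), one has β_α(P_{XY}, P_X × P_Y) ≤ β_{α+δ_1}(P_{XY}, P_X × Q_Y) / β_{δ_1}(P_Y, Q_Y). -/

import Mathlib

open MeasureTheory
open scoped ENNReal

/-- Minimal type-II error over randomized (`[0,1]`-valued) tests with
type-I success probability at least `α`. -/
noncomputable def beta {W : Type*} [MeasurableSpace W] (α : ℝ) (P Q : MeasureTheory.Measure W) : ℝ :=
  sInf {b : ℝ | ∃ T : W → ℝ, Measurable T ∧ (∀ w, T w ∈ Set.Icc (0:ℝ) 1) ∧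
    α ≤ ∫ w, T w ∂P ∧ b = ∫ w, T w ∂Q}

lemma beta_bddBelow {W : Type*} [MeasurableSpace W] (α : ℝ) (P Q : MeasureTheory.Measure W) :
    BddBelow {b : ℝ | ∃ T : W → ℝ, Measurable T ∧ (∀ w, T w ∈ Set.Icc (0:ℝ) 1) ∧
      α ≤ ∫ w, T w ∂P ∧ b = ∫ w, T w ∂Q} := by
  refine ⟨0, ?_⟩
  rintro b ⟨T, _, hT01, _, rfl⟩
  exact integral_nonneg fun w => (hT01 w).1

/-- Change-of-measure lower bound:
`β_α(P_XY, P_X × P_Y) ≤ β_{α+δ₁}(P_XY, P_X × Q_Y) / β_{δ₁}(P_Y, Q_Y)`. -/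
theorem beta_change_of_measure_ub {X Y : Type*} [MeasurableSpace X] [MeasurableSpace Y]
    (PXY : Measure (X × Y)) [IsProbabilityMeasure PXY]
    (PX : Measure X) (PY QY : Measure Y) [IsProbabilityMeasure QY]
    (hPX : PX = PXY.map Prod.fst) (hPY : PY = PXY.map Prod.snd)
    (α δ₁ : ℝ) (hα : α ∈ Set.Ioo (0 : ℝ) 1) (hδ : δ₁ ∈ Set.Ioo (0 : ℝ) (1 - α))
    (hac : PY ≪ QY) (hpos : 0 < beta δ₁ PY QY) :
    beta α PXY (PX.prod PY) ≤ beta (α + δ₁) PXY (PX.prod QY) / beta δ₁ PY QY := by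
  obtain ⟨hα0, hα1⟩ := hα
  obtain ⟨hδ0, hδ1⟩ := hδ
  set c := beta δ₁ PY QY with hc_def
  have hc : 0 < c := hpos
  haveI hPXprob : IsProbabilityMeasure PX := by
    rw [hPX]; exact Measure.isProbabilityMeasure_map measurable_fst.aemeasurable
  haveI hPYprob : IsProbabilityMeasure PY := by
    rw [hPY]; exact Measure.isProbabilityMeasure_map measurable_snd.aemeasurable
  set f := PY.rnDeriv QY with hf_def
  have hf_meas : Measurable f := Measure.measurable_rnDeriv _ _
  set τ : ℝ≥0∞ := ENNReal.ofReal (1/c) with hτ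
  set A : Set Y := {y | τ < f y} with hA
  have hA_meas : MeasurableSet A := hf_meas measurableSet_Ioi
  -- Key claim: P_Y(A) ≤ δ₁
  have key : (PY A).toReal ≤ δ₁ := by
    by_contra h
    push_neg at h
    have hPA_pos : PY A ≠ 0 := by
      intro h0
      rw [h0] at h
      simp at h
      linarith
    have hQA_pos : QY A ≠ 0 := fun h0 => hPA_pos (hac h0)
    have hmem : (QY A).toReal ∈ {b : ℝ | ∃ T : Y → ℝ, Measurable T ∧
        (∀ w, T w ∈ Set.Icc (0:ℝ) 1) ∧ δ₁ ≤ ∫ w, T w ∂PY ∧ b = ∫ w, T w ∂QY} := by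
      refine ⟨A.indicator (fun _ => 1), measurable_const.indicator hA_meas, ?_, ?_, ?_⟩
      · intro w
        by_cases hw : w ∈ A <;> simp [Set.indicator, hw]
      · rw [integral_indicator_const _ hA_meas]
        simpa [Measure.real] using h.le
      · rw [integral_indicator_const _ hA_meas]
        simp [Measure.real]
    have hcle : c ≤ (QY A).toReal := csInf_le (beta_bddBelow δ₁ PY QY) hmem
    -- show (QY A).toReal < c, contradiction
    have hstrict : QY A < ENNReal.ofReal c := by
      have h2 : ∫⁻ _ in A, 1 ∂QY < ∫⁻ y in A, ENNReal.ofReal c * f y ∂QY := by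
        refine setLIntegral_strict_mono hA_meas hQA_pos
          (measurable_const.mul hf_meas) ?_ (ae_of_all _ ?_)
        · rw [setLIntegral_one]; exact measure_ne_top _ _
        · intro y hy
          have h1 : (1 : ℝ≥0∞) = ENNReal.ofReal c * τ := by
            rw [hτ, ← ENNReal.ofReal_mul hc.le, mul_one_div_cancel hc.ne']
            simp
          rw [h1]
          exact ENNReal.mul_lt_mul_right (by simpa using hc) ENNReal.ofReal_ne_top hy
      rw [setLIntegral_one] at h2
      have h3 : ∫⁻ y in A, ENNReal.ofReal c * f y ∂QY = ENNReal.ofReal c * PY A := by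
        rw [lintegral_const_mul _ hf_meas, Measure.setLIntegral_rnDeriv hac]
      rw [h3] at h2
      calc QY A < ENNReal.ofReal c * PY A := h2
        _ ≤ ENNReal.ofReal c * 1 := by gcongr; exact prob_le_one
        _ = ENNReal.ofReal c := mul_one _
    have : (QY A).toReal < c := by
      rw [← ENNReal.toReal_ofReal hc.le]
      exact ENNReal.toReal_strict_mono ENNReal.ofReal_ne_top hstrict
    linarith
  -- Main part
  have main : ∀ b ∈ {b : ℝ | ∃ T : X × Y → ℝ, Measurable T ∧
      (∀ w, T w ∈ Set.Icc (0:ℝ) 1) ∧ α + δ₁ ≤ ∫ w, T w ∂PXY ∧ b = ∫ w, T w ∂(PX.prod QY)},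
      beta α PXY (PX.prod PY) * c ≤ b := by
    rintro b ⟨T, hT, hT01, hTP, rfl⟩
    set T' : X × Y → ℝ := fun p => T p * (Aᶜ).indicator (fun _ => 1) p.2 with hT'_def
    have hT'_meas : Measurable T' :=
      hT.mul ((measurable_const.indicator hA_meas.compl).comp measurable_snd)
    have hT'cases : ∀ p : X × Y, (p.2 ∈ A → T' p = 0) ∧ (p.2 ∉ A → T' p = T p) := by
      intro p
      constructor <;> intro hp <;> simp [hT'_def, Set.indicator_apply, hp]
    have hT'01 : ∀ p, T' p ∈ Set.Icc (0:ℝ) 1 := by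
      intro p
      by_cases hp : p.2 ∈ A
      · rw [(hT'cases p).1 hp]; exact Set.mem_Icc.mpr ⟨le_rfl, zero_le_one⟩
      · rw [(hT'cases p).2 hp]; exact hT01 p
    -- integrability of bounded measurable functions wrt PXY
    have hint : ∀ (g : X × Y → ℝ), Measurable g → (∀ p, g p ∈ Set.Icc (0:ℝ) 1) →
        Integrable g PXY := by
      intro g hg hg01
      refine Integrable.mono' (integrable_const 1) hg.aestronglyMeasurable (ae_of_all _ ?_)
      intro p
      rw [Real.norm_eq_abs, abs_of_nonneg (hg01 p).1]
      exact (hg01 p).2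
    set D : X × Y → ℝ := fun p => T p * A.indicator (fun _ => 1) p.2 with hD_def
    have hD_meas : Measurable D :=
      hT.mul ((measurable_const.indicator hA_meas).comp measurable_snd)
    have hDcases : ∀ p : X × Y, (p.2 ∈ A → D p = T p) ∧ (p.2 ∉ A → D p = 0) := by
      intro p
      constructor <;> intro hp <;> simp [hD_def, Set.indicator_apply, hp]
    have hD01 : ∀ p, D p ∈ Set.Icc (0:ℝ) 1 := by
      intro p
      by_cases hp : p.2 ∈ A
      · rw [(hDcases p).1 hp]; exact hT01 p
      · rw [(hDcases p).2 hp]; exact Set.mem_Icc.mpr ⟨le_rfl, zero_le_one⟩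
    have hTsplit : T = fun p => T' p + D p := by
      funext p
      by_cases hp : p.2 ∈ A
      · rw [(hT'cases p).1 hp, (hDcases p).1 hp, zero_add]
      · rw [(hT'cases p).2 hp, (hDcases p).2 hp, add_zero]
    -- ∫ D ∂PXY ≤ δ₁
    have hDle : ∫ p, D p ∂PXY ≤ δ₁ := by
      have h1 : ∫ p, D p ∂PXY ≤ ∫ p, A.indicator (fun _ => (1:ℝ)) p.2 ∂PXY := by
        refine integral_mono (hint D hD_meas hD01) ?_ ?_
        · refine hint _ ((measurable_const.indicator hA_meas).comp measurable_snd) ?_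
          intro p
          by_cases hp : p.2 ∈ A <;> simp [Set.indicator, hp]
        · intro p
          by_cases hp : p.2 ∈ A
          · rw [(hDcases p).1 hp]; simp [Set.indicator_apply, hp]; exact (hT01 p).2
          · rw [(hDcases p).2 hp]; simp [Set.indicator_apply, hp]
      have h2 : ∫ p, A.indicator (fun _ => (1:ℝ)) p.2 ∂PXY = (PY A).toReal := by
        rw [hPY, ← integral_map measurable_snd.aemeasurable
          ((measurable_const.indicator hA_meas).aestronglyMeasurable (μ := PXY.map Prod.snd)),
          integral_indicator_const _ hA_meas]
        simp [hPY, Measure.real]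
      linarith [key, h1, h2.le]
    have hT'P : α ≤ ∫ p, T' p ∂PXY := by
      have : ∫ p, T p ∂PXY = ∫ p, T' p ∂PXY + ∫ p, D p ∂PXY := by
        rw [hTsplit]
        exact integral_add (hint T' hT'_meas hT'01) (hint D hD_meas hD01)
      linarith
    -- the analytic bound
    have hbound : ∫ p, T' p ∂(PX.prod PY) ≤ (1/c) * ∫ p, T p ∂(PX.prod QY) := by
      have hT'nn : ∀ p, 0 ≤ T' p := fun p => (hT'01 p).1
      have hTnn : ∀ p, 0 ≤ T p := fun p => (hT01 p).1
      have hmeasT' : Measurable fun p => ENNReal.ofReal (T' p) :=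
        ENNReal.measurable_ofReal.comp hT'_meas
      have hmeasT : Measurable fun p => ENNReal.ofReal (T p) :=
        ENNReal.measurable_ofReal.comp hT
      have step2a : ∀ x, ∫⁻ y, ENNReal.ofReal (T' (x, y)) ∂PY ≤
          ENNReal.ofReal (1/c) * ∫⁻ y, ENNReal.ofReal (T (x, y)) ∂QY := by
        intro x
        have hmy : Measurable fun y => ENNReal.ofReal (T' (x, y)) :=
          hmeasT'.comp (measurable_prodMk_left)
        have hmy2 : Measurable fun y => ENNReal.ofReal (T (x, y)) :=
          hmeasT.comp (measurable_prodMk_left)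
        rw [← Measure.withDensity_rnDeriv_eq PY QY hac,
          lintegral_withDensity_eq_lintegral_mul _ hf_meas hmy,
          ← lintegral_const_mul _ hmy2]
        refine lintegral_mono fun y => ?_
        by_cases hy : y ∈ A
        · have h0 : T' (x, y) = 0 := (hT'cases (x, y)).1 hy
          simp [Pi.mul_apply, h0]
        · have hfy : f y ≤ τ := not_lt.mp hy
          have hTy : T' (x, y) = T (x, y) := (hT'cases (x, y)).2 hy
          simp only [Pi.mul_apply, hTy]
          exact mul_le_mul_left hfy _
      have step2 : ∫⁻ p, ENNReal.ofReal (T' p) ∂(PX.prod PY) ≤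
          ENNReal.ofReal (1/c) * ∫⁻ p, ENNReal.ofReal (T p) ∂(PX.prod QY) := by
        rw [lintegral_prod _ hmeasT'.aemeasurable, lintegral_prod _ hmeasT.aemeasurable,
          ← lintegral_const_mul _ hmeasT.lintegral_prod_right']
        exact lintegral_mono step2a
      have hIfin : ∫⁻ p, ENNReal.ofReal (T p) ∂(PX.prod QY) ≠ ⊤ := by
        refine ne_top_of_le_ne_top (by simp : (1 : ℝ≥0∞) ≠ ⊤) ?_
        calc ∫⁻ p, ENNReal.ofReal (T p) ∂(PX.prod QY)
            ≤ ∫⁻ _, 1 ∂(PX.prod QY) :=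
              lintegral_mono fun p => ENNReal.ofReal_le_one.mpr (hT01 p).2
          _ = 1 := by simp
      rw [integral_eq_lintegral_of_nonneg_ae (ae_of_all _ hT'nn) hT'_meas.aestronglyMeasurable,
        integral_eq_lintegral_of_nonneg_ae (ae_of_all _ hTnn) hT.aestronglyMeasurable]
      calc (∫⁻ p, ENNReal.ofReal (T' p) ∂(PX.prod PY)).toReal
          ≤ (ENNReal.ofReal (1/c) * ∫⁻ p, ENNReal.ofReal (T p) ∂(PX.prod QY)).toReal := by
            refine ENNReal.toReal_mono ?_ step2
            exact ENNReal.mul_ne_top ENNReal.ofReal_ne_top hIfin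
        _ = (1/c) * (∫⁻ p, ENNReal.ofReal (T p) ∂(PX.prod QY)).toReal := by
            rw [ENNReal.toReal_mul, ENNReal.toReal_ofReal (by positivity)]
    -- T' witnesses beta α
    have hbetale : beta α PXY (PX.prod PY) ≤ ∫ p, T' p ∂(PX.prod PY) :=
      csInf_le (beta_bddBelow α PXY (PX.prod PY)) ⟨T', hT'_meas, hT'01, hT'P, rfl⟩
    have hTQnn : 0 ≤ ∫ p, T p ∂(PX.prod QY) := integral_nonneg fun p => (hT01 p).1
    calc beta α PXY (PX.prod PY) * c ≤ ((1/c) * ∫ p, T p ∂(PX.prod QY)) * c := by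
          nlinarith [hbetale, hbound]
      _ = ∫ p, T p ∂(PX.prod QY) := by field_simp
  -- conclude
  have hne : {b : ℝ | ∃ T : X × Y → ℝ, Measurable T ∧
      (∀ w, T w ∈ Set.Icc (0:ℝ) 1) ∧ α + δ₁ ≤ ∫ w, T w ∂PXY ∧
      b = ∫ w, T w ∂(PX.prod QY)}.Nonempty := by
    refine ⟨∫ w, (1:ℝ) ∂(PX.prod QY), fun _ => 1, measurable_const, ?_, ?_, rfl⟩
    · intro w; exact ⟨zero_le_one, le_refl 1⟩
    · simp; linarith
  have hfin : beta α PXY (PX.prod PY) * c ≤ beta (α + δ₁) PXY (PX.prod QY) :=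
    le_csInf hne main
  rw [le_div_iff₀ hc]
  exact hfin
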